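/- Let p be a prime, let M be a free ℤ_p-module of rank d, let 1 ≤ i ≤ d, and let n ≥ 0 be an integer. If N, N₀ ∈ Gr(i, M) satisfy N ⊆ N₀ + pⁿM, then N + pⁿM = N₀ + pⁿM. -/

import Mathlib

open Submodule

/-- In a finite product `ι → R`, the submodule `I • ⊤` is the set of tuples with all
coordinates in `I`. -/
private lemma aux_ideal_smul_top_pi {R : Type*} [CommRing R] (ι : Type*) [Fintype ι]
    [DecidableEq ι] (I : Ideal R) :
    (I • ⊤ : Submodule R (ι → R)) = Submodule.pi Set.univ (fun _ => I) := by
  apply le_antisymm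
  · refine Submodule.smul_le.2 fun r hr x _ => ?_
    intro j _
    exact I.mul_mem_right _ hr
  · intro x hx
    have hx' : x = ∑ j, Pi.single j (x j) := by
      rw [Finset.univ_sum_single]
    rw [hx']
    refine Submodule.sum_mem _ fun j _ => ?_
    have h1 : Pi.single j (x j) = x j • (Pi.single j (1 : R) : ι → R) := by
      ext k
      by_cases h : j = k
      · subst h; simp
      · simp [Pi.single_eq_of_ne (Ne.symm h)]
    rw [h1]
    exact Submodule.smul_mem_smul (hx j trivial) trivial

private lemma aux_finite_padic_quot (p : ℕ) [Fact p.Prime] (n : ℕ) :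
    Finite (PadicInt p ⧸ (Ideal.span {(p : PadicInt p) ^ n})) := by
  have hsurj : Function.Surjective (PadicInt.toZModPow (p := p) n) := by
    intro x
    refine ⟨(x.val : PadicInt p), ?_⟩
    rw [map_natCast, ZMod.natCast_val, ZMod.cast_id]
  haveI : NeZero (p ^ n) :=
    ⟨pow_ne_zero n (Fact.out (p := p.Prime)).ne_zero⟩
  rw [← PadicInt.ker_toZModPow (p := p) n]
  exact Finite.of_equiv _ (RingHom.quotientKerEquivOfSurjective hsurj).symm.toEquiv

set_option synthInstance.maxHeartbeats 800000 in
private lemma aux_finite_pi_quot (p : ℕ) [Fact p.Prime] (n i : ℕ) :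
    Finite ((Fin i → PadicInt p) ⧸
      (Ideal.span {(p : PadicInt p) ^ n} • (⊤ : Submodule (PadicInt p) (Fin i → PadicInt p)))) := by
  rw [aux_ideal_smul_top_pi]
  haveI := aux_finite_padic_quot p n
  exact Finite.of_equiv _
    (Submodule.quotientPi (fun _ : Fin i =>
      (Ideal.span {(p : PadicInt p) ^ n} : Submodule (PadicInt p) (PadicInt p)))).symm.toEquiv

/-- If `M ⧸ N` is free of finrank `i ≥ 1`, then `M ⧸ (N ⊔ pⁿM)` is isomorphic to
`(Fin i → ℤ_p) ⧸ pⁿ(⊤)`. -/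
private noncomputable def aux_quot_equiv (p : ℕ) [Fact p.Prime] (n i : ℕ)
    (M : Type*) [AddCommGroup M] [Module (PadicInt p) M]
    (N : Submodule (PadicInt p) M)
    (hNfree : Module.Free (PadicInt p) (M ⧸ N)) (hi : 1 ≤ i)
    (hNrank : Module.finrank (PadicInt p) (M ⧸ N) = i) :
    (M ⧸ (N ⊔ (Ideal.span {(p : PadicInt p) ^ n} • (⊤ : Submodule (PadicInt p) M)))) ≃ₗ[PadicInt p]
      ((Fin i → PadicInt p) ⧸
        (Ideal.span {(p : PadicInt p) ^ n} •
          (⊤ : Submodule (PadicInt p) (Fin i → PadicInt p)))) := by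
  set R := PadicInt p
  set J : Ideal R := Ideal.span {(p : R) ^ n}
  haveI := hNfree
  haveI : Module.Finite R (M ⧸ N) :=
    Module.finite_of_finrank_pos (by rw [hNrank]; exact hi)
  -- a basis of M ⧸ N indexed by Fin i
  let b : Module.Basis (Fin i) R (M ⧸ N) := Module.finBasisOfFinrankEq R (M ⧸ N) hNrank
  -- M ⧸ (N ⊔ J•⊤) ≃ (M ⧸ N) ⧸ ((J•⊤).map N.mkQ)
  have e0 : ((M ⧸ N) ⧸ (J • (⊤ : Submodule R M)).map N.mkQ) ≃ₗ[R]
      M ⧸ (N ⊔ J • (⊤ : Submodule R M)) :=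
    Submodule.quotientQuotientEquivQuotientSup N (J • ⊤)
  have hmap : (J • (⊤ : Submodule R M)).map N.mkQ = J • (⊤ : Submodule R (M ⧸ N)) := by
    rw [Submodule.map_smul'', Submodule.map_top, Submodule.range_mkQ]
  rw [hmap] at e0
  -- (M ⧸ N) ⧸ J•⊤ ≃ (Fin i → R) ⧸ J•⊤
  have e1 : (M ⧸ N) ≃ₗ[R] (Fin i → R) := b.equivFun
  have e2 : ((M ⧸ N) ⧸ (J • (⊤ : Submodule R (M ⧸ N)))) ≃ₗ[R]
      ((Fin i → R) ⧸ (J • (⊤ : Submodule R (Fin i → R)))) := by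
    refine Submodule.Quotient.equiv _ _ e1 ?_
    rw [Submodule.map_smul'', Submodule.map_top, LinearEquiv.range]
  exact e0.symm.trans e2

theorem grassmannian_neighborhood_sup
    (p : ℕ) [Fact p.Prime] (d i : ℕ) (hi : 1 ≤ i) (hid : i ≤ d) (n : ℕ)
    (M : Type*) [AddCommGroup M] [Module (PadicInt p) M]
    (hfree : Module.Free (PadicInt p) M)
    (hrank : Module.finrank (PadicInt p) M = d)
    (N N₀ : Submodule (PadicInt p) M)
    (hNfree : Module.Free (PadicInt p) (M ⧸ N))
    (hNrank : Module.finrank (PadicInt p) (M ⧸ N) = i)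
    (hN₀free : Module.Free (PadicInt p) (M ⧸ N₀))
    (hN₀rank : Module.finrank (PadicInt p) (M ⧸ N₀) = i)
    (hsub : N ≤ N₀ ⊔ (Ideal.span {(p : PadicInt p) ^ n} • (⊤ : Submodule (PadicInt p) M))) :
    N ⊔ (Ideal.span {(p : PadicInt p) ^ n} • (⊤ : Submodule (PadicInt p) M)) =
      N₀ ⊔ (Ideal.span {(p : PadicInt p) ^ n} • (⊤ : Submodule (PadicInt p) M)) := by
  set R := PadicInt p
  set J : Ideal R := Ideal.span {(p : R) ^ n} with hJ
  set A := N ⊔ J • (⊤ : Submodule R M) with hA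
  set B := N₀ ⊔ J • (⊤ : Submodule R M) with hB
  have hAB : A ≤ B := sup_le hsub le_sup_right
  -- both quotients are equivalent to the same finite model
  have eA := aux_quot_equiv p n i M N hNfree hi hNrank
  have eB := aux_quot_equiv p n i M N₀ hN₀free hi hN₀rank
  haveI hfin : Finite ((Fin i → R) ⧸
      (J • (⊤ : Submodule R (Fin i → R)))) := aux_finite_pi_quot p n i
  haveI : Finite (M ⧸ A) := Finite.of_equiv _ eA.symm.toEquiv
  haveI : Finite (M ⧸ B) := Finite.of_equiv _ eB.symm.toEquiv
  have hcard : Nat.card (M ⧸ A) = Nat.card (M ⧸ B) := by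
    rw [Nat.card_eq_of_bijective _ eA.bijective, Nat.card_eq_of_bijective _ eB.bijective]
  -- the canonical surjection M⧸A → M⧸B is bijective
  let f : (M ⧸ A) →ₗ[R] (M ⧸ B) := Submodule.mapQ A B LinearMap.id hAB
  have hfsurj : Function.Surjective f := by
    intro y
    obtain ⟨x, rfl⟩ := Submodule.Quotient.mk_surjective B y
    exact ⟨Submodule.Quotient.mk x, rfl⟩
  have hfbij : Function.Bijective f :=
    (Nat.bijective_iff_surjective_and_card f).mpr ⟨hfsurj, hcard⟩
  -- hence B ≤ A
  refine le_antisymm hAB fun x hx => ?_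
  have h0 : f (Submodule.Quotient.mk x) = 0 := by
    have : f (Submodule.Quotient.mk x) = Submodule.Quotient.mk x := rfl
    rw [this, Submodule.Quotient.mk_eq_zero]
    exact hx
  have : (Submodule.Quotient.mk x : M ⧸ A) = 0 := by
    apply hfbij.injective
    rw [h0, map_zero]
  rwa [Submodule.Quotient.mk_eq_zero] at this
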